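/- arXiv:2503.14115 — 2 statements merged into one kernel-verified Lean document; each statement's English description precedes it below -/
import Mathlib

section
/- The output of PSC is a 2-approximate Pareto front: let T be a trajectory with n vertices and Δ ≥ 0. Suppose S is a set of Δ-clusters such that for every node interval [i,k] of a balanced binary tree over [1,n] and every prefix or suffix P of T[i,k], S contains a maximum-cardinality Δ-cluster with centre P. Then for every Δ-cluster (P, 𝒫) there exists (Q, 𝒬) ∈ S with |𝒬| ≥ |𝒫| and |P| ≤ 2|Q|, where |P| denotes the number of vertices of the centre. -/
/-- One step of a discrete walk: each coordinate stays or decreases by one. -/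
def Step (p q : ℕ × ℕ) : Prop :=
  (q.1 = p.1 ∨ q.1 + 1 = p.1) ∧ (q.2 = p.2 ∨ q.2 + 1 = p.2)

/-- A discrete walk from `(x, y)` down to `(1, 1)`. -/
def IsWalk (F : List (ℕ × ℕ)) (x y : ℕ) : Prop :=
  F.head? = some (x, y) ∧ F.getLast? = some (1, 1) ∧ List.Chain' Step F

/-- The cost of a discrete walk: maximum pointwise distance along the walk. -/
noncomputable def walkCost (P Q : ℕ → ℝ × ℝ) (F : List (ℕ × ℕ)) : ℝ :=
  (F.map fun p => dist (P p.1) (Q p.2)).foldr max 0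

/-- The discrete Fréchet distance between the sequences `P 1, …, P x` and `Q 1, …, Q y`. -/
noncomputable def dF (P : ℕ → ℝ × ℝ) (x : ℕ) (Q : ℕ → ℝ × ℝ) (y : ℕ) : ℝ :=
  sInf {c | ∃ F, IsWalk F x y ∧ walkCost P Q F = c}

/-- The subtrajectory of `T` starting at index `a`, reindexed from `1`. -/
def subtraj (T : ℕ → ℝ × ℝ) (a : ℕ) : ℕ → ℝ × ℝ := fun i => T (a + i - 1)

/-- `(T[a,b], Ps)` is a `Δ`-cluster: members of `Ps` are subtrajectories (given by their
index intervals) at discrete Fréchet distance at most `Δ` from the centre `T[a,b]`,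
the index intervals of distinct members are pairwise disjoint, and the centre is a member. -/
def IsCluster (T : ℕ → ℝ × ℝ) (Δ : ℝ) (a b : ℕ) (Ps : Finset (ℕ × ℕ)) : Prop :=
  (a, b) ∈ Ps ∧
  (∀ p ∈ Ps, 1 ≤ p.1 ∧ p.1 ≤ p.2 ∧
    dF (subtraj T a) (b - a + 1) (subtraj T p.1) (p.2 - p.1 + 1) ≤ Δ) ∧
  ∀ p ∈ Ps, ∀ q ∈ Ps, p ≠ q → Disjoint (Finset.Icc p.1 p.2) (Finset.Icc q.1 q.2)

/-- Binary trees whose leaves are consecutive integers. -/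
inductive BTree : Type
  | leaf (i : ℕ) : BTree
  | node (l r : BTree) : BTree

/-- Left endpoint of the interval of a tree. -/
def BTree.lo : BTree → ℕ
  | .leaf i => i
  | .node l _ => l.lo

/-- Right endpoint of the interval of a tree. -/
def BTree.hi : BTree → ℕ
  | .leaf i => i
  | .node _ r => r.hi

/-- Well-formedness: at every node the right child's interval starts right after
the left child's interval ends. -/
def BTree.WF : BTree → Prop
  | .leaf _ => True
  | .node l r => l.WF ∧ r.WF ∧ r.lo = l.hi + 1

/-- The set of all nodes (subtrees) of a tree. -/
def BTree.nodes : BTree → Set BTree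
  | .leaf i => {BTree.leaf i}
  | .node l r => insert (BTree.node l r) (l.nodes ∪ r.nodes)

/- ---- basic foldr max lemmas ---- -/

lemma foldr_max_nonneg (l : List ℝ) : 0 ≤ l.foldr max 0 := by
  induction l with
  | nil => simp
  | cons a t ih => simpa using Or.inr ih

lemma walkCost_nonneg (P Q F) : 0 ≤ walkCost P Q F := foldr_max_nonneg _

lemma foldr_max_append (l1 l2 : List ℝ) :
    l2.foldr max 0 ≤ (l1 ++ l2).foldr max 0 ∧ l1.foldr max 0 ≤ (l1 ++ l2).foldr max 0 := by
  induction l1 with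
  | nil => exact ⟨le_rfl, foldr_max_nonneg _⟩
  | cons a t ih =>
    refine ⟨?_, ?_⟩ <;> simp only [List.cons_append, List.foldr_cons]
    · exact ih.1.trans (le_max_right _ _)
    · exact max_le_max le_rfl ih.2

lemma foldr_max_mem (l : List ℝ) : l.foldr max 0 = 0 ∨ l.foldr max 0 ∈ l := by
  induction l with
  | nil => simp
  | cons a t ih =>
    simp only [List.foldr_cons]
    rcases max_choice a (t.foldr max 0) with h | h
    · right; simp [h]
    · rw [h]
      rcases ih with h' | h'
      · exact Or.inl h'
      · exact Or.inr (List.mem_cons_of_mem _ h')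

lemma foldr_max_le (l : List ℝ) (h : ∀ r ∈ l, r ≤ 0) : l.foldr max 0 ≤ 0 := by
  rcases foldr_max_mem l with h' | h'
  · exact le_of_eq h'
  · exact h _ h'

/- ---- walk bounds ---- -/

def Dom (p q : ℕ × ℕ) : Prop := q.1 ≤ p.1 ∧ q.2 ≤ p.2

lemma step_dom {p q} (h : Step p q) : Dom p q := by
  obtain ⟨h1, h2⟩ := h; constructor <;> omega

instance : IsTrans (ℕ × ℕ) Dom :=
  ⟨fun _ _ _ h1 h2 => ⟨h2.1.trans h1.1, h2.2.trans h1.2⟩⟩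

lemma walk_pairwise {F : List (ℕ×ℕ)} (h : List.Chain' Step F) : F.Pairwise Dom :=
  (List.isChain_iff_pairwise).1 (List.IsChain.imp (fun _ _ hs => step_dom hs) h)

lemma walk_bounds {F : List (ℕ×ℕ)} {x y} (h : IsWalk F x y) :
    ∀ p ∈ F, 1 ≤ p.1 ∧ p.1 ≤ x ∧ 1 ≤ p.2 ∧ p.2 ≤ y := by
  obtain ⟨h1, h2, h3⟩ := h
  have hP : F.Pairwise Dom := walk_pairwise h3
  intro p hp
  have hne : F ≠ [] := by rintro rfl; simp at h1
  have hlast : F.getLast hne = (1, 1) := by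
    rwa [List.getLast?_eq_getLast hne, Option.some_inj] at h2
  have hub : Dom (x,y) p ∨ p = (x,y) := by
    obtain ⟨q, t, rfl⟩ := List.exists_cons_of_ne_nil hne
    have : q = (x, y) := by simpa using h1
    subst this
    rcases List.mem_cons.1 hp with rfl | hp
    · exact Or.inr rfl
    · exact Or.inl (List.rel_of_pairwise_cons hP hp)
  have hlb : Dom p (1,1) ∨ p = (1,1) := by
    have hsplit := List.dropLast_append_getLast hne
    rw [hlast] at hsplit
    rw [← hsplit] at hp hP
    rcases List.mem_append.1 hp with hp | hp
    · exact Or.inl ((List.pairwise_append.1 hP).2.2 p hp (1,1) (List.mem_singleton_self _))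
    · exact Or.inr (List.mem_singleton.1 hp)
  obtain ⟨p1, p2⟩ := p
  simp only [Dom, Prod.mk.injEq] at hub hlb
  omega

/- ---- splitting a walk at first coordinate t ---- -/

lemma walk_split {F : List (ℕ×ℕ)} {x y t : ℕ} (h : IsWalk F x y) (ht1 : 1 ≤ t)
    (ht2 : t ≤ x) :
    ∃ G j0 H, F = G ++ (t, j0) :: H ∧ ∀ p ∈ G, t < p.1 := by
  classical
  obtain ⟨h1, h2, h3⟩ := h
  set pr : ℕ × ℕ → Bool := fun p => decide (t < p.1) with hpr
  have hGD : F.takeWhile pr ++ F.dropWhile pr = F := List.takeWhile_append_dropWhile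
  have hne : F ≠ [] := by rintro rfl; simp at h1
  have hlast : F.getLast hne = (1,1) := by
    rwa [List.getLast?_eq_getLast hne, Option.some_inj] at h2
  have hmem : (1,1) ∈ F := hlast ▸ List.getLast_mem hne
  have hDne : F.dropWhile pr ≠ [] := by
    intro hD
    have := (List.dropWhile_eq_nil_iff).1 hD _ hmem
    simp [hpr] at this
    omega
  obtain ⟨d, H, hD⟩ := List.exists_cons_of_ne_nil hDne
  have hd1le : d.1 ≤ t := by
    have h5 := List.head_dropWhile_not pr hDne
    rw [Option.some_injective _ ((List.head?_eq_head hDne).symm.trans (by rw [hD]; rfl))] at h5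
    simp only [hD, List.head_cons, hpr] at h5
    simpa using h5
  have hd1ge : t ≤ d.1 := by
    rcases eq_or_ne (F.takeWhile pr) [] with hG | hG
    · have hF : F = d :: H := by rw [← hGD, hG, hD]; rfl
      have h6 : d = (x, y) := by rw [hF] at h1; simpa using h1
      have : d.1 = x := by rw [h6]
      omega
    · obtain ⟨G', g, hG'⟩ : ∃ L b, F.takeWhile pr = L ++ [b] := by
        rcases (F.takeWhile pr).eq_nil_or_concat with h | h
        · exact absurd h hG
        · simpa only [List.concat_eq_append] using h
      have hF2 : F = (G' ++ [g]) ++ d :: H := by rw [← hGD, hG', hD]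
      have hchain := h3
      rw [hF2] at hchain
      have hstep : Step g d := by
        refine (List.isChain_append.1 hchain).2.2 g ?_ d ?_ <;> simp
      have hg : g ∈ F.takeWhile pr := by
        rw [hG']; exact List.mem_append_right _ (List.mem_singleton_self _)
      have hgt : t < g.1 := by
        have := List.mem_takeWhile_imp hg
        simpa [hpr] using this
      obtain ⟨hs1, _⟩ := hstep
      omega
  refine ⟨F.takeWhile pr, d.2, H, ?_, ?_⟩
  · have hdt : d.1 = t := le_antisymm hd1le hd1ge
    conv_lhs => rw [← hGD, hD]
    rw [← hdt]
  · intro p hp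
    have := List.mem_takeWhile_imp hp
    simpa [hpr] using this

/- ---- existence of walks; attainment ---- -/

lemma exists_walk (x y : ℕ) (hx : 1 ≤ x) (hy : 1 ≤ y) :
    IsWalk ((List.range (max x y)).map fun k => (max 1 (x-k), max 1 (y-k))) x y := by
  obtain ⟨M, hM⟩ : ∃ M, max x y = M + 1 := ⟨max x y - 1, by omega⟩
  refine ⟨?_, ?_, ?_⟩
  · rw [hM, List.range_succ_eq_map]
    simp only [List.map_cons, List.head?_cons]
    congr 2 <;> omega
  · rw [hM, List.range_succ, List.map_append,
      List.getLast?_append_of_ne_nil _ (by simp)]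
    simp only [List.map_cons, List.map_nil, List.getLast?_singleton, Option.some_inj]
    have : x - M ≤ 1 ∧ y - M ≤ 1 := by omega
    congr 1 <;> omega
  · rw [List.Chain', List.isChain_map, hM]
    refine (List.isChain_range_succ _ _).2 fun m hm => ⟨?_, ?_⟩ <;> omega

lemma dF_le_walkCost {P Q : ℕ → ℝ × ℝ} {x y : ℕ} {F} (h : IsWalk F x y) :
    dF P x Q y ≤ walkCost P Q F := by
  apply csInf_le
  · exact ⟨0, fun c hc => by obtain ⟨F', _, rfl⟩ := hc; exact walkCost_nonneg _ _ _⟩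
  · exact ⟨F, h, rfl⟩

lemma dF_attained (P Q : ℕ → ℝ × ℝ) {x y : ℕ} (hx : 1 ≤ x) (hy : 1 ≤ y) :
    ∃ F, IsWalk F x y ∧ walkCost P Q F = dF P x Q y := by
  have hne : Set.Nonempty {c | ∃ F, IsWalk F x y ∧ walkCost P Q F = c} :=
    ⟨_, _, exists_walk x y hx hy, rfl⟩
  have hfin : Set.Finite {c | ∃ F, IsWalk F x y ∧ walkCost P Q F = c} := by
    apply Set.Finite.subset (s := insert (0:ℝ)
      ((fun p : ℕ × ℕ => dist (P p.1) (Q p.2)) '' (Set.Icc 1 x ×ˢ Set.Icc 1 y)))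
    · exact Set.Finite.insert _ (Set.Finite.image _ (Set.Finite.prod
        (Set.finite_Icc _ _) (Set.finite_Icc _ _)))
    · rintro c ⟨F, hF, rfl⟩
      rcases foldr_max_mem (F.map fun p => dist (P p.1) (Q p.2)) with h0 | hm
      · exact Or.inl h0
      · obtain ⟨p, hp, hq⟩ := List.mem_map.1 hm
        have hb := walk_bounds hF p hp
        exact Or.inr ⟨p, ⟨⟨hb.1, hb.2.1⟩, ⟨hb.2.2.1, hb.2.2.2⟩⟩, hq⟩
  have := hne.csInf_mem hfin
  obtain ⟨F, hF, hc⟩ := this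
  exact ⟨F, hF, hc⟩

lemma dF_self_nonpos (P : ℕ → ℝ × ℝ) {x : ℕ} (hx : 1 ≤ x) : dF P x P x ≤ 0 := by
  refine le_trans (dF_le_walkCost (exists_walk x x hx hx)) (foldr_max_le _ ?_)
  intro r hr
  obtain ⟨p, hp, rfl⟩ := List.mem_map.1 hr
  obtain ⟨k, _, rfl⟩ := List.mem_map.1 hp
  simp

/- ---- trimming walks ---- -/

lemma walk_prefixTrim {F : List (ℕ × ℕ)} {x y t : ℕ} (h : IsWalk F x y) (ht1 : 1 ≤ t)
    (ht2 : t ≤ x) (P Q : ℕ → ℝ × ℝ) :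
    ∃ j0 F', 1 ≤ j0 ∧ j0 ≤ y ∧ IsWalk F' t j0 ∧ walkCost P Q F' ≤ walkCost P Q F := by
  obtain ⟨G, j0, H, hFeq, hG⟩ := walk_split h ht1 ht2
  have hmem : (t, j0) ∈ F := by
    rw [hFeq]; exact List.mem_append_right _ List.mem_cons_self
  have hb := walk_bounds h _ hmem
  refine ⟨j0, (t, j0) :: H, by simpa using hb.2.2.1, by simpa using hb.2.2.2,
    ⟨rfl, ?_, ?_⟩, ?_⟩
  · have h2 := h.2.1
    rw [hFeq, List.getLast?_append_of_ne_nil _ (by simp)] at h2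
    exact h2
  · exact h.2.2.suffix ⟨G, hFeq.symm⟩
  · unfold walkCost
    conv_rhs => rw [hFeq]
    rw [List.map_append]
    exact (foldr_max_append _ _).1

lemma chain'_map_of_mem {α β : Type*} {R : α → α → Prop} {S : β → β → Prop} {f : α → β} :
    ∀ {l : List α}, List.Chain' R l →
      (∀ a ∈ l, ∀ b ∈ l, R a b → S (f a) (f b)) → List.Chain' S (l.map f)
  | [], _, _ => List.isChain_nil
  | [a], _, _ => List.isChain_singleton _
  | a :: b :: l, h, hf => by
    rw [List.map_cons, List.map_cons, List.Chain', List.isChain_cons_cons]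
    refine ⟨hf a (by simp) b (by simp) ((List.isChain_cons_cons.1 h).1), ?_⟩
    rw [← List.map_cons]
    exact chain'_map_of_mem (List.isChain_cons_cons.1 h).2
      (fun p hp q hq hr => hf p (List.mem_cons_of_mem _ hp) q (List.mem_cons_of_mem _ hq) hr)

lemma walk_suffixTrim {F : List (ℕ × ℕ)} {x y s : ℕ} (h : IsWalk F x y) (hs : s + 1 ≤ x)
    (T : ℕ → ℝ × ℝ) (a p1 : ℕ) :
    ∃ j0, 1 ≤ j0 ∧ j0 ≤ y ∧ ∃ F', IsWalk F' (x - s) (y - j0 + 1) ∧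
      walkCost (subtraj T (a + s)) (subtraj T (p1 + j0 - 1)) F'
        ≤ walkCost (subtraj T a) (subtraj T p1) F := by
  obtain ⟨G, j0, H, hFeq, hG⟩ := walk_split h (by omega) hs
  have hmem : (s+1, j0) ∈ F := by
    rw [hFeq]; exact List.mem_append_right _ List.mem_cons_self
  have hb := walk_bounds h _ hmem
  have hj1 : 1 ≤ j0 := by simpa using hb.2.2.1
  have hj2 : j0 ≤ y := by simpa using hb.2.2.2
  set G' : List (ℕ × ℕ) := G ++ [(s+1, j0)] with hG'
  set φ : ℕ × ℕ → ℕ × ℕ := fun p => (p.1 - s, p.2 + 1 - j0) with hφ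
  have hpre : G' ++ H = F := by rw [hFeq, hG']; simp
  have hGmem : ∀ p ∈ G', s + 1 ≤ p.1 ∧ j0 ≤ p.2 := by
    intro p hp
    rcases List.mem_append.1 hp with hp | hp
    · have h1 : s + 1 ≤ p.1 := le_of_lt (hG p hp)
      have hP : F.Pairwise Dom := walk_pairwise h.2.2
      rw [hFeq] at hP
      have := (List.pairwise_append.1 hP).2.2 p hp (s+1, j0) List.mem_cons_self
      exact ⟨h1, this.2⟩
    · rw [List.mem_singleton.1 hp]
      exact ⟨le_rfl, le_rfl⟩
  refine ⟨j0, hj1, hj2, G'.map φ, ⟨?_, ?_, ?_⟩, ?_⟩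
  · rw [List.head?_map]
    have hne' : G' ≠ [] := by simp [hG']
    have h1 : G'.head? = F.head? := by
      obtain ⟨v, t, hvt⟩ := List.exists_cons_of_ne_nil hne'
      rw [← hpre, hvt]; rfl
    rw [h1, h.1]
    simp only [Option.map_some, Option.some_inj, hφ]
    have : j0 ≤ y := hj2
    congr 1 <;> omega
  · rw [List.getLast?_map, hG', List.getLast?_concat]
    simp only [Option.map_some, Option.some_inj, hφ]
    congr 1 <;> omega
  · refine chain'_map_of_mem (h.2.2.prefix ⟨H, hpre⟩) ?_
    intro p hp q hq hr
    obtain ⟨hp1, hp2⟩ := hGmem p hp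
    obtain ⟨hq1, hq2⟩ := hGmem q hq
    obtain ⟨hr1, hr2⟩ := hr
    constructor <;> simp only [hφ] <;> omega
  · unfold walkCost
    rw [List.map_map]
    have hcongr : G'.map ((fun p : ℕ × ℕ =>
        dist (subtraj T (a+s) p.1) (subtraj T (p1+j0-1) p.2)) ∘ φ)
        = G'.map (fun p : ℕ × ℕ => dist (subtraj T a p.1) (subtraj T p1 p.2)) := by
      apply List.map_congr_left
      intro p hp
      obtain ⟨hp1, hp2⟩ := hGmem p hp
      simp only [Function.comp, hφ, subtraj]
      congr 2 <;> omega
    rw [hcongr]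
    refine le_trans (foldr_max_append _
      (H.map fun p : ℕ × ℕ => dist (subtraj T a p.1) (subtraj T p1 p.2))).2
      (le_of_eq ?_)
    rw [← List.map_append, hpre]

/- ---- cluster restriction lemmas ---- -/

lemma cluster_ends_ne {T : ℕ → ℝ × ℝ} {Δ : ℝ} {a b : ℕ} {Ps : Finset (ℕ × ℕ)}
    (hC : IsCluster T Δ a b Ps) :
    ∀ p ∈ Ps, ∀ q ∈ Ps, p ≠ q → p.1 ≠ q.1 ∧ p.2 ≠ q.2 := by
  obtain ⟨hctr, hmemb, hdisj⟩ := hC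
  intro p hp q hq hne
  have hdp := hdisj p hp q hq hne
  obtain ⟨_, hp12, _⟩ := hmemb p hp
  obtain ⟨_, hq12, _⟩ := hmemb q hq
  constructor
  · intro h
    exact (Finset.disjoint_left.1 hdp (Finset.mem_Icc.2 ⟨le_rfl, hp12⟩))
      (Finset.mem_Icc.2 ⟨le_of_eq h.symm, h ▸ hq12⟩)
  · intro h
    exact (Finset.disjoint_left.1 hdp (Finset.mem_Icc.2 ⟨hp12, le_rfl⟩))
      (Finset.mem_Icc.2 ⟨h ▸ hq12, le_of_eq h⟩)

lemma cluster_prefix {T : ℕ → ℝ × ℝ} {Δ : ℝ} (hΔ : 0 ≤ Δ) {a b b' : ℕ} (h1 : a ≤ b')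
    (h2 : b' ≤ b) {Ps : Finset (ℕ × ℕ)} (hC : IsCluster T Δ a b Ps) :
    ∃ Qs, IsCluster T Δ a b' Qs ∧ Ps.card ≤ Qs.card := by
  classical
  obtain ⟨hctr, hmemb, hdisj⟩ := hC
  have ha1 : 1 ≤ a := (hmemb _ hctr).1
  have hkey : ∀ p ∈ Ps, ∃ e, 1 ≤ e ∧ p.1 + e - 1 ≤ p.2 ∧
      dF (subtraj T a) (b' - a + 1) (subtraj T p.1) e ≤ Δ := by
    intro p hp
    obtain ⟨hp1, hp12, hpd⟩ := hmemb p hp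
    obtain ⟨F, hF, hcost⟩ := dF_attained (subtraj T a) (subtraj T p.1)
      (x := b - a + 1) (y := p.2 - p.1 + 1) (by omega) (by omega)
    obtain ⟨j0, F', hj1, hj2, hW, hc⟩ := walk_prefixTrim hF
      (t := b' - a + 1) (by omega) (by omega) (subtraj T a) (subtraj T p.1)
    refine ⟨j0, hj1, by omega, ?_⟩
    calc dF (subtraj T a) (b' - a + 1) (subtraj T p.1) j0
        ≤ walkCost (subtraj T a) (subtraj T p.1) F' := dF_le_walkCost hW
      _ ≤ walkCost (subtraj T a) (subtraj T p.1) F := hc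
      _ = dF (subtraj T a) (b - a + 1) (subtraj T p.1) (p.2 - p.1 + 1) := hcost
      _ ≤ Δ := hpd
  choose! e he1 he2 he3 using hkey
  set f : ℕ × ℕ → ℕ × ℕ :=
    fun p => if p = (a, b) then (a, b') else (p.1, p.1 + e p - 1) with hf
  have hfsub : ∀ p ∈ Ps, (f p).1 = p.1 ∧ p.1 ≤ (f p).2 ∧ (f p).2 ≤ p.2 := by
    intro p hp
    by_cases hpc : p = (a, b)
    · subst hpc; simp only [hf, if_pos rfl]
      exact ⟨by trivial, h1, h2⟩
    · simp only [hf, if_neg hpc]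
      have := he1 p hp; have := he2 p hp
      exact ⟨by trivial, by omega, by omega⟩
  have hinj : Set.InjOn f Ps := by
    intro p hp q hq hfe
    by_contra hne
    have hends := cluster_ends_ne ⟨hctr, hmemb, hdisj⟩ p hp q hq hne
    have : (f p).1 = (f q).1 := by rw [hfe]
    rw [(hfsub p hp).1, (hfsub q hq).1] at this
    by_cases hpc : p = (a, b)
    · exact hends.1 this
    · exact hends.1 this
  refine ⟨Ps.image f, ⟨?_, ?_, ?_⟩, ?_⟩
  · refine Finset.mem_image.2 ⟨(a, b), hctr, ?_⟩
    simp [hf]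
  · intro q hq
    obtain ⟨p, hp, rfl⟩ := Finset.mem_image.1 hq
    obtain ⟨hp1, hp12, hpd⟩ := hmemb p hp
    by_cases hpc : p = (a, b)
    · subst hpc
      simp only [hf, if_pos rfl]
      refine ⟨ha1, h1, ?_⟩
      have : (b' : ℕ) - a + 1 = b' - a + 1 := rfl
      exact le_trans (dF_self_nonpos _ (by omega)) hΔ
    · simp only [hf, if_neg hpc]
      refine ⟨hp1, by have := he1 p hp; omega, ?_⟩
      have h3 := he3 p hp
      have he : p.1 + e p - 1 - p.1 + 1 = e p := by
        have := he1 p hp; omega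
      rw [he]
      exact h3
  · intro q hq q' hq' hne
    obtain ⟨p, hp, rfl⟩ := Finset.mem_image.1 hq
    obtain ⟨p', hp', rfl⟩ := Finset.mem_image.1 hq'
    have hpne : p ≠ p' := by rintro rfl; exact hne rfl
    have hd := hdisj p hp p' hp' hpne
    have hs := hfsub p hp
    have hs' := hfsub p' hp'
    refine Finset.disjoint_left.2 fun i hi hi' => ?_
    rw [Finset.mem_Icc] at hi hi'
    exact Finset.disjoint_left.1 hd
      (Finset.mem_Icc.2 (⟨by omega, by omega⟩ : p.1 ≤ i ∧ i ≤ p.2))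
      (Finset.mem_Icc.2 (⟨by omega, by omega⟩ : p'.1 ≤ i ∧ i ≤ p'.2))
  · exact le_of_eq (Finset.card_image_of_injOn hinj).symm

lemma cluster_suffix {T : ℕ → ℝ × ℝ} {Δ : ℝ} (hΔ : 0 ≤ Δ) {a a' b : ℕ} (h1 : a ≤ a')
    (h2 : a' ≤ b) {Ps : Finset (ℕ × ℕ)} (hC : IsCluster T Δ a b Ps) :
    ∃ Qs, IsCluster T Δ a' b Qs ∧ Ps.card ≤ Qs.card := by
  classical
  obtain ⟨hctr, hmemb, hdisj⟩ := hC
  have ha1 : 1 ≤ a := (hmemb _ hctr).1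
  have hkey : ∀ p ∈ Ps, ∃ e, 1 ≤ e ∧ e ≤ p.2 - p.1 + 1 ∧
      dF (subtraj T a') (b - a' + 1) (subtraj T (p.1 + e - 1))
        (p.2 - (p.1 + e - 1) + 1) ≤ Δ := by
    intro p hp
    obtain ⟨hp1, hp12, hpd⟩ := hmemb p hp
    obtain ⟨F, hF, hcost⟩ := dF_attained (subtraj T a) (subtraj T p.1)
      (x := b - a + 1) (y := p.2 - p.1 + 1) (by omega) (by omega)
    obtain ⟨j0, hj1, hj2, F', hW, hc⟩ := walk_suffixTrim hF (s := a' - a)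
      (by omega) T a p.1
    refine ⟨j0, hj1, hj2, ?_⟩
    have e1 : (b - a + 1) - (a' - a) = b - a' + 1 := by omega
    have e2 : (p.2 - p.1 + 1) - j0 + 1 = p.2 - (p.1 + j0 - 1) + 1 := by omega
    have e3 : a + (a' - a) = a' := by omega
    rw [e1, e2] at hW
    rw [e3] at hc
    calc dF (subtraj T a') (b - a' + 1) (subtraj T (p.1 + j0 - 1))
          (p.2 - (p.1 + j0 - 1) + 1)
        ≤ walkCost (subtraj T a') (subtraj T (p.1 + j0 - 1)) F' := dF_le_walkCost hW
      _ ≤ walkCost (subtraj T a) (subtraj T p.1) F := hc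
      _ = dF (subtraj T a) (b - a + 1) (subtraj T p.1) (p.2 - p.1 + 1) := hcost
      _ ≤ Δ := hpd
  choose! e he1 he2 he3 using hkey
  set f : ℕ × ℕ → ℕ × ℕ :=
    fun p => if p = (a, b) then (a', b) else (p.1 + e p - 1, p.2) with hf
  have hfsub : ∀ p ∈ Ps, (f p).2 = p.2 ∧ p.1 ≤ (f p).1 ∧ (f p).1 ≤ p.2 := by
    intro p hp
    obtain ⟨hp1, hp12, _⟩ := hmemb p hp
    by_cases hpc : p = (a, b)
    · subst hpc; simp only [hf, if_pos rfl]
      exact ⟨by trivial, h1, h2⟩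
    · simp only [hf, if_neg hpc]
      have := he1 p hp; have := he2 p hp
      exact ⟨by trivial, by omega, by omega⟩
  have hinj : Set.InjOn f Ps := by
    intro p hp q hq hfe
    by_contra hne
    have hends := cluster_ends_ne ⟨hctr, hmemb, hdisj⟩ p hp q hq hne
    have : (f p).2 = (f q).2 := by rw [hfe]
    rw [(hfsub p hp).1, (hfsub q hq).1] at this
    exact hends.2 this
  refine ⟨Ps.image f, ⟨?_, ?_, ?_⟩, ?_⟩
  · refine Finset.mem_image.2 ⟨(a, b), hctr, ?_⟩
    simp [hf]
  · intro q hq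
    obtain ⟨p, hp, rfl⟩ := Finset.mem_image.1 hq
    obtain ⟨hp1, hp12, hpd⟩ := hmemb p hp
    by_cases hpc : p = (a, b)
    · subst hpc
      simp only [hf, if_pos rfl]
      refine ⟨by omega, h2, ?_⟩
      exact le_trans (dF_self_nonpos _ (by omega)) hΔ
    · simp only [hf, if_neg hpc]
      have h3 := he3 p hp
      have := he1 p hp; have := he2 p hp
      exact ⟨by omega, by omega, h3⟩
  · intro q hq q' hq' hne
    obtain ⟨p, hp, rfl⟩ := Finset.mem_image.1 hq
    obtain ⟨p', hp', rfl⟩ := Finset.mem_image.1 hq'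
    have hpne : p ≠ p' := by rintro rfl; exact hne rfl
    have hd := hdisj p hp p' hp' hpne
    have hs := hfsub p hp
    have hs' := hfsub p' hp'
    refine Finset.disjoint_left.2 fun i hi hi' => ?_
    rw [Finset.mem_Icc] at hi hi'
    exact Finset.disjoint_left.1 hd
      (Finset.mem_Icc.2 (⟨by omega, by omega⟩ : p.1 ≤ i ∧ i ≤ p.2))
      (Finset.mem_Icc.2 (⟨by omega, by omega⟩ : p'.1 ≤ i ∧ i ≤ p'.2))
  · exact le_of_eq (Finset.card_image_of_injOn hinj).symm






lemma btree_self_mem_nodes : ∀ B : BTree, B ∈ B.nodes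
  | .leaf i => by simp [BTree.nodes]
  | .node l r => by simp [BTree.nodes]

lemma btree_mem_nodes_left {l r v : BTree} (h : v ∈ l.nodes) :
    v ∈ (BTree.node l r).nodes := by
  simp only [BTree.nodes, Set.mem_insert_iff, Set.mem_union]
  exact Or.inr (Or.inl h)

lemma btree_mem_nodes_right {l r v : BTree} (h : v ∈ r.nodes) :
    v ∈ (BTree.node l r).nodes := by
  simp only [BTree.nodes, Set.mem_insert_iff, Set.mem_union]
  exact Or.inr (Or.inr h)

lemma btree_find : ∀ (B : BTree), B.WF → ∀ a b : ℕ, B.lo ≤ a → a ≤ b → b ≤ B.hi →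
    ∃ v ∈ B.nodes, ∃ c, v.lo ≤ c ∧ c ≤ v.hi ∧
      ((c = a ∧ a ≤ v.hi ∧ v.hi ≤ b ∧ b - a + 1 ≤ 2 * (v.hi - a + 1)) ∨
       (c = b ∧ a ≤ v.lo ∧ v.lo ≤ b ∧ b - a + 1 ≤ 2 * (b - v.lo + 1)))
  | .leaf i, _, a, b, h1, h2, h3 => by
    have e1 : BTree.lo (.leaf i) = i := rfl
    have e2 : BTree.hi (.leaf i) = i := rfl
    rw [e1] at h1; rw [e2] at h3
    exact ⟨.leaf i, btree_self_mem_nodes _, a, by rw [e1]; omega, by rw [e2]; omega,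
      Or.inl ⟨rfl, by rw [e2]; omega, by rw [e2]; omega, by rw [e2]; omega⟩⟩
  | .node l r, hWF, a, b, h1, h2, h3 => by
    obtain ⟨hl, hr, hsplit⟩ := hWF
    have hlo' : BTree.lo (.node l r) = l.lo := rfl
    have hhi' : BTree.hi (.node l r) = r.hi := rfl
    rw [hlo'] at h1
    rw [hhi'] at h3
    by_cases hb : b ≤ l.hi
    · obtain ⟨v, hv, rest⟩ := btree_find l hl a b h1 h2 hb
      exact ⟨v, ⟨btree_mem_nodes_left hv, rest⟩⟩
    · by_cases ha : r.lo ≤ a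
      · obtain ⟨v, hv, rest⟩ := btree_find r hr a b ha h2 h3
        exact ⟨v, ⟨btree_mem_nodes_right hv, rest⟩⟩
      · have ham : a ≤ l.hi := by omega
        by_cases hhalf : b - a + 1 ≤ 2 * (l.hi - a + 1)
        · exact ⟨l, btree_mem_nodes_left (btree_self_mem_nodes l), a, h1, ham,
            Or.inl ⟨rfl, ham, by omega, hhalf⟩⟩
        · exact ⟨r, btree_mem_nodes_right (btree_self_mem_nodes r), b, by omega, h3,
            Or.inr ⟨rfl, by omega, by omega, by omega⟩⟩

/-- the output of PSC is a 2-approximate Pareto front: if S contains, for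
every prefix and every suffix of every node interval of a balanced binary tree over
[1,n], a maximum-cardinality Δ-cluster with that centre, then for every Δ-cluster
(P, Ps) there is (Q, Qs) ∈ S with |Qs| ≥ |Ps| and |P| ≤ 2|Q|. -/
theorem psc_two_approx (T : ℕ → ℝ × ℝ) (n : ℕ) (Δ : ℝ) (hΔ : 0 ≤ Δ)
    (B : BTree) (hWF : B.WF) (hlo : B.lo = 1) (hhi : B.hi = n)
    (S : Set ((ℕ × ℕ) × Finset (ℕ × ℕ)))
    (hS : ∀ v ∈ B.nodes, ∀ c, v.lo ≤ c → c ≤ v.hi →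
      (∃ Qs, ((v.lo, c), Qs) ∈ S ∧ IsCluster T Δ v.lo c Qs ∧
        ∀ Qs' : Finset (ℕ × ℕ), IsCluster T Δ v.lo c Qs' → Qs'.card ≤ Qs.card) ∧
      (∃ Qs, ((c, v.hi), Qs) ∈ S ∧ IsCluster T Δ c v.hi Qs ∧
        ∀ Qs' : Finset (ℕ × ℕ), IsCluster T Δ c v.hi Qs' → Qs'.card ≤ Qs.card)) :
    ∀ a b (Ps : Finset (ℕ × ℕ)), IsCluster T Δ a b Ps → b ≤ n →
      ∃ q Qs, (q, Qs) ∈ S ∧ Ps.card ≤ Qs.card ∧ b - a + 1 ≤ 2 * (q.2 - q.1 + 1) := by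
  intro a b Ps hC hbn
  obtain ⟨hctr, hmemb, hdisj⟩ := hC
  have ha1 : 1 ≤ a := (hmemb _ hctr).1
  have hab : a ≤ b := (hmemb _ hctr).2.1
  obtain ⟨v, hv, c, hc1, hc2, hcase⟩ := btree_find B hWF a b
    (by rw [hlo]; exact ha1) hab (by rw [hhi]; exact hbn)
  rcases hcase with ⟨hca, hav, hvb, hlen⟩ | ⟨hca, hav, hvb, hlen⟩ <;> subst hca
  · obtain ⟨Qs, hQS, hQc, hQmax⟩ := (hS v hv c hc1 hc2).2
    obtain ⟨Qs', hQ'c, hQ'card⟩ := cluster_prefix hΔ hav hvb ⟨hctr, hmemb, hdisj⟩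
    exact ⟨(c, v.hi), Qs, hQS, le_trans hQ'card (hQmax Qs' hQ'c), by simpa using hlen⟩
  · obtain ⟨Qs, hQS, hQc, hQmax⟩ := (hS v hv c hc1 hc2).1
    obtain ⟨Qs', hQ'c, hQ'card⟩ := cluster_suffix hΔ hav hvb ⟨hctr, hmemb, hdisj⟩
    exact ⟨(v.lo, c), Qs, hQS, le_trans hQ'card (hQmax Qs' hQ'c), by simpa using hlen⟩
end

section
/- Greedy maximality of the BBGLL query: fix a trajectory T with n vertices, Δ ≥ 0 and a centre P = T[a, b]. Scanning columns from n down to 1, whenever the current vertex (b, j₂) can reach row a in the free-space graph, add the subtrajectory T[j₁, j₂] to 𝒫 where j₁ is the maximum column such that there is a directed path from (b, j₂) to (a, j₁), and continue the scan at column j₁ − 1. Then the resulting set 𝒫 has maximum cardinality among all sets of pairwise index-disjoint subtrajectories of T, each at discrete Fréchet distance at most Δ from P. -/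
/-- A directed path in the free-space graph `M_Δ(T, T)` from `s` to `t`:
all visited cells are zeroes (distance at most `Δ`) and consecutive cells
differ by a step of the grid graph. -/
def IsFSPath (T : ℕ → ℝ × ℝ) (Δ : ℝ) (F : List (ℕ × ℕ)) (s t : ℕ × ℕ) : Prop :=
  F.head? = some s ∧ F.getLast? = some t ∧ List.Chain' Step F ∧
  ∀ p ∈ F, dist (T p.1) (T p.2) ≤ Δ

open Classical in
/-- The greedy Query scan of BBGLL: scan columns from high to low; whenever the current
vertex (b, j₂) can reach row a in the free-space graph, add T[j₁, j₂] where j₁ is the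
maximum landing column in row a, and continue the scan at column j₁ - 1. -/
noncomputable def greedyQuery (T : ℕ → ℝ × ℝ) (Δ : ℝ) (a b : ℕ) : ℕ → Finset (ℕ × ℕ)
  | 0 => ∅
  | (j + 1) =>
    if _h : ∃ j₁, ∃ F, IsFSPath T Δ F (b, j + 1) (a, j₁) then
      insert (Nat.findGreatest (fun j₁ => ∃ F, IsFSPath T Δ F (b, j + 1) (a, j₁)) (j + 1), j + 1)
        (greedyQuery T Δ a b
          (Nat.findGreatest (fun j₁ => ∃ F, IsFSPath T Δ F (b, j + 1) (a, j₁)) (j + 1) - 1))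
    else greedyQuery T Δ a b j
  decreasing_by
  · have := Nat.findGreatest_le (P := fun j₁ => ∃ F, IsFSPath T Δ F (b, j + 1) (a, j₁)) (j + 1)
    omega
  · omega

-- helper lemmas

lemma head_eq_cons {F : List (ℕ × ℕ)} {u : ℕ × ℕ} (h : F.head? = some u) :
    ∃ l, F = u :: l := by
  cases F with
  | nil => simp at h
  | cons a l => simp at h; exact ⟨l, by rw [h]⟩

lemma chain'_last_le {F : List (ℕ × ℕ)} {t : ℕ × ℕ} (hc : List.Chain' Step F)
    (ht : F.getLast? = some t) : ∀ p ∈ F, t.1 ≤ p.1 ∧ t.2 ≤ p.2 := by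
  induction F with
  | nil => simp
  | cons u l ih =>
    intro p hp
    cases l with
    | nil =>
      simp at ht hp
      subst ht; subst hp; omega
    | cons w r =>
      rw [List.getLast?_cons_cons] at ht
      replace hc := List.isChain_cons_cons.mp hc
      rcases List.mem_cons.mp hp with rfl | hp
      · have hw := ih hc.2 ht w (by simp)
        obtain ⟨h1, h2⟩ := hc.1
        omega
      · exact ih hc.2 ht p hp

lemma chain'_le_head {F : List (ℕ × ℕ)} {u : ℕ × ℕ} (hc : List.Chain' Step F)
    (hu : F.head? = some u) : ∀ p ∈ F, p.1 ≤ u.1 ∧ p.2 ≤ u.2 := by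
  induction F generalizing u with
  | nil => simp
  | cons v l ih =>
    simp at hu; subst hu
    intro p hp
    rcases List.mem_cons.mp hp with rfl | hp
    · omega
    · cases l with
      | nil => simp at hp
      | cons w r =>
        replace hc := List.isChain_cons_cons.mp hc
        have := ih (u := w) hc.2 rfl p hp
        obtain ⟨h1, h2⟩ := hc.1
        omega

lemma mem_le_walkCost (P Q : ℕ → ℝ × ℝ) {F : List (ℕ × ℕ)} {p : ℕ × ℕ} (hp : p ∈ F) :
    dist (P p.1) (Q p.2) ≤ walkCost P Q F := by
  induction F with
  | nil => simp at hp
  | cons a l ih =>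
    unfold walkCost at *
    simp only [List.map_cons, List.foldr_cons]
    rcases List.mem_cons.mp hp with rfl | hp
    · exact le_max_left _ _
    · exact le_trans (ih hp) (le_max_right _ _)

instance : Std.Commutative (max : ℝ → ℝ → ℝ) := ⟨max_comm⟩
instance : Std.Associative (max : ℝ → ℝ → ℝ) := ⟨max_assoc⟩
instance : Std.IdempotentOp (max : ℝ → ℝ → ℝ) := ⟨max_self⟩

lemma foldr_max_eq_fold (f : ℕ × ℕ → ℝ) (l : List (ℕ × ℕ)) :
    (l.map f).foldr max 0 = l.toFinset.fold max 0 f := by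
  induction l with
  | nil => simp
  | cons a l ih =>
    simp only [List.map_cons, List.foldr_cons, List.toFinset_cons,
      Finset.fold_insert_idem, ih]

def Wv : ℕ → List (ℕ × ℕ)
  | 0 => [(1,1)]
  | y+1 => (1, y+2) :: Wv y

def Wh (y : ℕ) : ℕ → List (ℕ × ℕ)
  | 0 => Wv y
  | x+1 => (x+2, y+1) :: Wh y x

lemma isWalk_cons {F : List (ℕ × ℕ)} {x y x' y' : ℕ} (h : IsWalk F x' y')
    (hs : Step (x, y) (x', y')) : IsWalk ((x, y) :: F) x y := by
  obtain ⟨h1, h2, h3⟩ := h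
  obtain ⟨l, rfl⟩ := head_eq_cons h1
  refine ⟨rfl, ?_, ?_⟩
  · rw [List.getLast?_cons_cons]; exact h2
  · exact List.isChain_cons_cons.mpr ⟨hs, h3⟩

lemma Wv_walk : ∀ y : ℕ, IsWalk (Wv y) 1 (y + 1) := by
  intro y
  induction y with
  | zero => exact ⟨rfl, rfl, List.isChain_singleton _⟩
  | succ y ih => exact isWalk_cons ih ⟨Or.inl rfl, Or.inr rfl⟩

lemma Wh_walk : ∀ x y : ℕ, IsWalk (Wh y x) (x + 1) (y + 1) := by
  intro x y
  induction x with
  | zero => exact Wv_walk y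
  | succ x ih => exact isWalk_cons ih ⟨Or.inr rfl, Or.inl rfl⟩

lemma exists_walk_s11 (x y : ℕ) (hx : 1 ≤ x) (hy : 1 ≤ y) : ∃ F, IsWalk F x y := by
  obtain ⟨x, rfl⟩ := Nat.exists_eq_add_of_le hx
  obtain ⟨y, rfl⟩ := Nat.exists_eq_add_of_le hy
  exact ⟨Wh y x, by simpa [Nat.add_comm] using Wh_walk x y⟩

lemma dF_path (T : ℕ → ℝ × ℝ) (Δ : ℝ) (a b x y : ℕ) (ha : 1 ≤ a) (hab : a ≤ b)
    (hx : 1 ≤ x) (hxy : x ≤ y)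
    (hd : dF (subtraj T a) (b - a + 1) (subtraj T x) (y - x + 1) ≤ Δ) :
    ∃ F, IsFSPath T Δ F (b, y) (a, x) := by
  set P := subtraj T a
  set Q := subtraj T x
  set X := b - a + 1
  set Y := y - x + 1
  set S : Set ℝ := {c | ∃ F, IsWalk F X Y ∧ walkCost P Q F = c} with hS
  have hne : S.Nonempty := by
    obtain ⟨F, hF⟩ := exists_walk_s11 X Y (by omega) (by omega)
    exact ⟨_, F, hF, rfl⟩
  have hfin : S.Finite := by
    apply Set.Finite.subset (Finset.finite_toSet
      (Finset.image (fun s : Finset (ℕ × ℕ) => s.fold max 0 (fun p => dist (P p.1) (Q p.2)))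
        (Finset.Icc ((1 : ℕ), (1 : ℕ)) (X, Y)).powerset))
    rintro c ⟨F, ⟨hh, hl, hc⟩, rfl⟩
    simp only [Finset.coe_image, Set.mem_image, Finset.mem_coe, Finset.mem_powerset]
    refine ⟨F.toFinset, ?_, (foldr_max_eq_fold _ F).symm⟩
    intro p hp
    rw [List.mem_toFinset] at hp
    have h1 := chain'_last_le hc hl p hp
    have h2 := chain'_le_head hc hh p hp
    rw [Finset.mem_Icc]
    exact ⟨⟨h1.1, h1.2⟩, ⟨h2.1, h2.2⟩⟩
  have hmem : sInf S ∈ S := hne.csInf_mem hfin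
  obtain ⟨F, hw, hcost⟩ := hmem
  obtain ⟨hh, hl, hc⟩ := hw
  refine ⟨F.map (fun p => (a + p.1 - 1, x + p.2 - 1)), ?_, ?_, ?_, ?_⟩
  · rw [List.head?_map, hh]
    simp only [Option.map_some]
    congr 2 <;> omega
  · rw [List.getLast?_map, hl]
    simp only [Option.map_some]
    congr 2 <;> omega
  · refine List.isChain_map_of_isChain _ ?_ hc
    rintro p q ⟨h1, h2⟩
    constructor
    · rcases h1 with h1 | h1
      · left; simp [h1]
      · right; simp only; omega
    · rcases h2 with h2 | h2
      · left; simp [h2]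
      · right; simp only; omega
  · intro p hp
    rw [List.mem_map] at hp
    obtain ⟨q, hq, rfl⟩ := hp
    have := mem_le_walkCost P Q hq
    rw [hcost] at this
    exact le_trans this hd

lemma fsPath_cons {T : ℕ → ℝ × ℝ} {Δ : ℝ} {G : List (ℕ × ℕ)} {u w t : ℕ × ℕ}
    (h : IsFSPath T Δ G w t) (hs : Step u w) (hd : dist (T u.1) (T u.2) ≤ Δ) :
    IsFSPath T Δ (u :: G) u t := by
  obtain ⟨h1, h2, h3, h4⟩ := h
  obtain ⟨l, rfl⟩ := head_eq_cons h1
  refine ⟨rfl, ?_, List.isChain_cons_cons.mpr ⟨hs, h3⟩, ?_⟩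
  · rw [List.getLast?_cons_cons]; exact h2
  · intro p hp
    rcases List.mem_cons.mp hp with rfl | hp
    · exact hd
    · exact h4 p hp

lemma fsPath_tail {T : ℕ → ℝ × ℝ} {Δ : ℝ} {l : List (ℕ × ℕ)} {u w t : ℕ × ℕ}
    (h : IsFSPath T Δ (u :: w :: l) u t) : IsFSPath T Δ (w :: l) w t := by
  obtain ⟨h1, h2, h3, h4⟩ := h
  exact ⟨rfl, by rw [List.getLast?_cons_cons] at h2; exact h2,
    (List.isChain_cons_cons.mp h3).2, fun p hp => h4 p (List.mem_cons_of_mem _ hp)⟩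

lemma cross (T : ℕ → ℝ × ℝ) (Δ : ℝ) (A : ℕ) (hA : 1 ≤ A) :
    ∀ N : ℕ, ∀ F1 F2 : List (ℕ × ℕ), ∀ u v : ℕ × ℕ, ∀ x x' : ℕ,
    F1.length + F2.length ≤ N →
    IsFSPath T Δ F1 u (A, x') → IsFSPath T Δ F2 v (A, x) →
    u.1 = v.1 → v.2 ≤ u.2 → x' ≤ x →
    ∃ G, IsFSPath T Δ G u (A, x) := by
  intro N
  induction N with
  | zero =>
    intro F1 F2 u v x x' hN h1 h2 _ _ _
    obtain ⟨l, rfl⟩ := head_eq_cons h1.1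
    simp at hN
  | succ N ih =>
    intro F1 F2 u v x x' hN h1 h2 hrow hcol hx
    obtain ⟨l1, rfl⟩ := head_eq_cons h1.1
    obtain ⟨l2, rfl⟩ := head_eq_cons h2.1
    by_cases huv : u = v
    · rw [huv]; exact ⟨v :: l2, h2⟩
    have hcol' : v.2 < u.2 := by
      rcases Nat.lt_or_ge v.2 u.2 with h | h
      · exact h
      · exact absurd (Prod.ext hrow (le_antisymm h hcol)) huv
    match l1, h1 with
    | [], h1 =>
      -- u = (A, x'), so u.1 = A, and F2 goes from row A to row A with col from v.2 to x
      have hu : u = (A, x') := by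
        have := h1.2.1; simp at this; exact this
      have hxv : x ≤ v.2 := (chain'_last_le h2.2.2.1 h2.2.1 v (by simp)).2
      have hvx' : v.2 < x' := by rw [hu] at hcol'; exact hcol'
      omega
    | w :: r1, h1 =>
      have hstep1 : Step u w := (List.isChain_cons_cons.mp h1.2.2.1).1
      have h1' : IsFSPath T Δ (w :: r1) w (A, x') := fsPath_tail h1
      have hdu : dist (T u.1) (T u.2) ≤ Δ := h1.2.2.2 u (by simp)
      rcases hstep1.1 with hr | hr
      · -- row stays for F1: advance F1
        obtain ⟨G, hG⟩ := ih (w :: r1) (v :: l2) w v x x' (by simp at hN ⊢; omega)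
          h1' h2 (by omega) (by have := hstep1.2; omega) hx
        exact ⟨u :: G, fsPath_cons hG ⟨Or.inl hr, hstep1.2⟩ hdu⟩
      · -- row decreases for F1
        match l2, h2 with
        | [], h2 =>
          -- v = (A, x); u.1 = v.1 = A; but F1 continues to row A - 1 and ends at row A
          have hv : v = (A, x) := by
            have := h2.2.1; simp at this; exact this
          have hAw : A ≤ w.1 := (chain'_last_le h1'.2.2.1 h1'.2.1 w (by simp)).1
          have huA : u.1 = A := by rw [hv] at hrow; exact hrow
          omega
        | v' :: r2, h2 =>
          have hstep2 : Step v v' := (List.isChain_cons_cons.mp h2.2.2.1).1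
          have h2' : IsFSPath T Δ (v' :: r2) v' (A, x) := fsPath_tail h2
          rcases hstep2.1 with hr2 | hr2
          · -- row stays for F2: advance F2
            exact ih (u :: w :: r1) (v' :: r2) u v' x x' (by simp at hN ⊢; omega)
              h1 h2' (by omega) (by have := hstep2.2; omega) hx
          · -- both rows decrease: advance both
            obtain ⟨G, hG⟩ := ih (w :: r1) (v' :: r2) w v' x x'
              (by simp at hN ⊢; omega) h1' h2' (by omega)
              (by have := hstep1.2; have := hstep2.2; omega) hx
            exact ⟨u :: G, fsPath_cons hG ⟨Or.inr hr, hstep1.2⟩ hdu⟩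

lemma greedy_snd_le (T : ℕ → ℝ × ℝ) (Δ : ℝ) (a b : ℕ) :
    ∀ m : ℕ, ∀ q ∈ greedyQuery T Δ a b m, q.2 ≤ m := by
  intro m
  induction m using Nat.strong_induction_on with
  | _ m ih =>
    match m with
    | 0 => intro q hq; rw [greedyQuery] at hq; simp at hq
    | j + 1 =>
      intro q hq
      classical
      rw [greedyQuery] at hq
      split_ifs at hq with h
      · set g := Nat.findGreatest (fun j₁ => ∃ F, IsFSPath T Δ F (b, j + 1) (a, j₁)) (j + 1) with hg
        have hgle : g ≤ j + 1 := Nat.findGreatest_le _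
        rcases Finset.mem_insert.mp hq with rfl | hq
        · simp
        · exact le_trans (ih (g - 1) (by omega) q hq) (by omega)
      · exact le_trans (ih j (by omega) q hq) (by omega)


lemma greedy_count (T : ℕ → ℝ × ℝ) (Δ : ℝ) (a b : ℕ) (ha : 1 ≤ a) :
    ∀ m : ℕ, ∀ Ps : Finset (ℕ × ℕ),
    (∀ p ∈ Ps, 1 ≤ p.1 ∧ p.1 ≤ p.2 ∧ p.2 ≤ m ∧ ∃ F, IsFSPath T Δ F (b, p.2) (a, p.1)) →
    (∀ p ∈ Ps, ∀ q ∈ Ps, p ≠ q → Disjoint (Finset.Icc p.1 p.2) (Finset.Icc q.1 q.2)) →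
    Ps.card ≤ (greedyQuery T Δ a b m).card := by
  intro m
  induction m using Nat.strong_induction_on with
  | _ m ih =>
    match m with
    | 0 =>
      intro Ps hmem _
      have : Ps = ∅ := Finset.eq_empty_of_forall_notMem (fun p hp => by
        have := hmem p hp; omega)
      simp [this]
    | j + 1 =>
      intro Ps hmem hdisj
      classical
      rw [greedyQuery]
      split_ifs with h
      · set g := Nat.findGreatest (fun j₁ => ∃ F, IsFSPath T Δ F (b, j + 1) (a, j₁)) (j + 1)
          with hg
        have hgle : g ≤ j + 1 := Nat.findGreatest_le _
        -- key : any member reaching column ≥ g has left endpoint ≤ g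
        have key : ∀ p ∈ Ps, g ≤ p.2 → p.1 ≤ g := by
          intro p hp hp2
          obtain ⟨hp1, hp12, hp2le, F2, hF2⟩ := hmem p hp
          obtain ⟨j₁, F0, hF0⟩ := h
          have hj₁ : j₁ ≤ j + 1 := by
            obtain ⟨l, hl⟩ := head_eq_cons hF0.1
            exact (chain'_last_le hF0.2.2.1 hF0.2.1 (b, j+1) (by rw [hl]; simp)).2
          rcases le_or_gt p.1 j₁ with hle | hlt
          · exact le_trans hle (Nat.le_findGreatest hj₁ ⟨F0, hF0⟩)
          · obtain ⟨G, hG⟩ := cross T Δ a ha (F0.length + F2.length) F0 F2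
              (b, j + 1) (b, p.2) p.1 j₁ le_rfl hF0 hF2 rfl hp2le (le_of_lt hlt)
            exact Nat.le_findGreatest (by omega) ⟨G, hG⟩
        have hS : (Ps.filter (fun p => g ≤ p.2)).card ≤ 1 := by
          refine Finset.card_le_one.mpr ?_
          intro p hp q hq
          rw [Finset.mem_filter] at hp hq
          by_contra hne
          have hd := hdisj p hp.1 q hq.1 hne
          have h1 : g ∈ Finset.Icc p.1 p.2 :=
            Finset.mem_Icc.mpr ⟨key p hp.1 hp.2, hp.2⟩
          have h2 : g ∈ Finset.Icc q.1 q.2 :=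
            Finset.mem_Icc.mpr ⟨key q hq.1 hq.2, hq.2⟩
          exact Finset.disjoint_left.mp hd h1 h2
        have hrest : (Ps.filter (fun p => ¬ g ≤ p.2)).card ≤
            (greedyQuery T Δ a b (g - 1)).card := by
          refine ih (g - 1) (by omega) _ ?_ ?_
          · intro p hp
            rw [Finset.mem_filter] at hp
            obtain ⟨h1, h2, _, h4⟩ := hmem p hp.1
            exact ⟨h1, h2, by omega, h4⟩
          · intro p hp q hq hne
            rw [Finset.mem_filter] at hp hq
            exact hdisj p hp.1 q hq.1 hne
        have hnotmem : (g, j + 1) ∉ greedyQuery T Δ a b (g - 1) := by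
          intro hmem'
          have := greedy_snd_le T Δ a b (g - 1) _ hmem'
          simp at this
          omega
        rw [Finset.card_insert_of_notMem hnotmem]
        calc Ps.card = (Ps.filter (fun p => g ≤ p.2)).card
              + (Ps.filter (fun p => ¬ g ≤ p.2)).card := by
              rw [Finset.card_filter_add_card_filter_not]
          _ ≤ (greedyQuery T Δ a b (g - 1)).card + 1 := by omega
      · refine ih j (by omega) Ps ?_ hdisj
        intro p hp
        obtain ⟨h1, h2, h3, F2, hF2⟩ := hmem p hp
        have : p.2 ≠ j + 1 := by
          intro heq
          exact h ⟨p.1, F2, heq ▸ hF2⟩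
        exact ⟨h1, h2, by omega, F2, hF2⟩

/-- greedy maximality of the BBGLL query: the greedy scan produces a set
of maximum cardinality among all sets of pairwise index-disjoint subtrajectories of T,
each at discrete Fréchet distance at most Δ from the centre P = T[a,b]. -/
theorem greedyQuery_max (T : ℕ → ℝ × ℝ) (n : ℕ) (Δ : ℝ) (hΔ : 0 ≤ Δ)
    (a b : ℕ) (ha : 1 ≤ a) (hab : a ≤ b) (hb : b ≤ n) :
    ∀ Ps : Finset (ℕ × ℕ),
      (∀ p ∈ Ps, 1 ≤ p.1 ∧ p.1 ≤ p.2 ∧ p.2 ≤ n ∧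
        dF (subtraj T a) (b - a + 1) (subtraj T p.1) (p.2 - p.1 + 1) ≤ Δ) →
      (∀ p ∈ Ps, ∀ q ∈ Ps, p ≠ q → Disjoint (Finset.Icc p.1 p.2) (Finset.Icc q.1 q.2)) →
      Ps.card ≤ (greedyQuery T Δ a b n).card := by
  intro Ps hmem hdisj
  apply greedy_count T Δ a b ha n Ps ?_ hdisj
  intro p hp
  obtain ⟨h1, h2, h3, h4⟩ := hmem p hp
  exact ⟨h1, h2, h3, dF_path T Δ a b p.1 p.2 ha hab h1 h2 h4⟩
end
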